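/- Let K be a field, let (V, c) be a braided vector space over K such that c is of Hecke type of mark λ with λ ≠ 0 and λ ≠ 1, and let b be a c-bracket on (V, c). Then b is either zero or surjective. -/

import Mathlib

open TensorProduct

noncomputable section

variable {K : Type*} [Field K] {V : Type*} [AddCommGroup V] [Module K V]

/-- The endomorphism `c ⊗ id_V` of `V ⊗ (V ⊗ V)` (transported along associativity). -/
def opC1 (c : V ⊗[K] V →ₗ[K] V ⊗[K] V) :
    V ⊗[K] (V ⊗[K] V) →ₗ[K] V ⊗[K] (V ⊗[K] V) :=
  (TensorProduct.assoc K V V V).toLinearMap ∘ₗ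
    LinearMap.rTensor V c ∘ₗ (TensorProduct.assoc K V V V).symm.toLinearMap

/-- The endomorphism `id_V ⊗ c` of `V ⊗ (V ⊗ V)`. -/
def opC2 (c : V ⊗[K] V →ₗ[K] V ⊗[K] V) :
    V ⊗[K] (V ⊗[K] V) →ₗ[K] V ⊗[K] (V ⊗[K] V) :=
  LinearMap.lTensor V c

/-- The map `b ⊗ id_V : V ⊗ (V ⊗ V) → V ⊗ V`. -/
def opB1 (b : V ⊗[K] V →ₗ[K] V) :
    V ⊗[K] (V ⊗[K] V) →ₗ[K] V ⊗[K] V :=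
  LinearMap.rTensor V b ∘ₗ (TensorProduct.assoc K V V V).symm.toLinearMap

/-- The map `id_V ⊗ b : V ⊗ (V ⊗ V) → V ⊗ V`. -/
def opB2 (b : V ⊗[K] V →ₗ[K] V) :
    V ⊗[K] (V ⊗[K] V) →ₗ[K] V ⊗[K] V :=
  LinearMap.lTensor V b

/-- The braid equation `c₁ ∘ c₂ ∘ c₁ = c₂ ∘ c₁ ∘ c₂`. -/
def BraidEq (c : V ⊗[K] V →ₗ[K] V ⊗[K] V) : Prop :=
  opC1 c ∘ₗ opC2 c ∘ₗ opC1 c = opC2 c ∘ₗ opC1 c ∘ₗ opC2 c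

/-- `c` is of Hecke type of mark `lam`: `(c + id) ∘ (c - lam • id) = 0`. -/
def IsHecke (lam : K) (c : V ⊗[K] V →ₗ[K] V ⊗[K] V) : Prop :=
  (c + LinearMap.id) ∘ₗ (c - lam • LinearMap.id) = 0

/-- `b` is a `c`-bracket: `c ∘ b₁ = b₂ ∘ c₁ ∘ c₂` and `c ∘ b₂ = b₁ ∘ c₂ ∘ c₁`. -/
def IsBracket (c : V ⊗[K] V →ₗ[K] V ⊗[K] V) (b : V ⊗[K] V →ₗ[K] V) : Prop :=
  c ∘ₗ opB1 b = opB2 b ∘ₗ opC1 c ∘ₗ opC2 c ∧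
  c ∘ₗ opB2 b = opB1 b ∘ₗ opC2 c ∘ₗ opC1 c

/-- The linear map `V ⊗ V → T(V)`, `v ⊗ w ↦ ι v * ι w`. -/
def tensMul : V ⊗[K] V →ₗ[K] TensorAlgebra K V :=
  LinearMap.mul' K (TensorAlgebra K V) ∘ₗ
    TensorProduct.map (TensorAlgebra.ι K) (TensorAlgebra.ι K)

/-- The relation on `T(V)` whose associated ring quotient is
`U(V,c,b) = T(V)/(c(z) - lam•z - b(z) : z ∈ V ⊗ V)`. -/
def envRel (lam : K) (c : V ⊗[K] V →ₗ[K] V ⊗[K] V) (b : V ⊗[K] V →ₗ[K] V) :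
    TensorAlgebra K V → TensorAlgebra K V → Prop :=
  fun x y => ∃ z : V ⊗[K] V,
    x = tensMul (c z) ∧ y = lam • tensMul z + TensorAlgebra.ι K (b z)

/-- The canonical map `ι_{c,b} : V → U(V,c,b)`. -/
def envIota (lam : K) (c : V ⊗[K] V →ₗ[K] V ⊗[K] V) (b : V ⊗[K] V →ₗ[K] V) :
    V →ₗ[K] RingQuot (envRel lam c b) :=
  (RingQuot.mkAlgHom K (envRel lam c b)).toLinearMap ∘ₗ TensorAlgebra.ι K

/-- The q-integer `(n)_lam = 1 + lam + ⋯ + lam^(n-1)`. -/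
def qInt (lam : K) (n : ℕ) : K := ∑ i ∈ Finset.range n, lam ^ i

/-- The q-factorial `(n)!_lam = (1)_lam (2)_lam ⋯ (n)_lam`. -/
def qFac (lam : K) (n : ℕ) : K := ∏ i ∈ Finset.range n, qInt lam (i + 1)


-- auxiliary lemmas

lemma hecke_pointwise (lam : K) (c : V ⊗[K] V →ₗ[K] V ⊗[K] V) (hHecke : IsHecke lam c) :
    ∀ x, c (c x) = lam • c x - c x + lam • x := by
  intro x
  have h := LinearMap.congr_fun hHecke x
  simp only [LinearMap.comp_apply, LinearMap.sub_apply, LinearMap.add_apply,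
    LinearMap.smul_apply, LinearMap.id_apply, LinearMap.zero_apply, map_sub, map_smul] at h
  linear_combination (norm := module) h

lemma hecke_surjective (lam : K) (hlam0 : lam ≠ 0) (c : V ⊗[K] V →ₗ[K] V ⊗[K] V)
    (hHecke : IsHecke lam c) : Function.Surjective c := by
  have hpt := hecke_pointwise lam c hHecke
  intro y
  refine ⟨lam⁻¹ • (c y + y - lam • y), ?_⟩
  rw [map_smul, map_sub, map_add, map_smul, hpt]
  match_scalars <;> field_simp <;> ring

lemma le_of_maps (lam : K) (hlam1 : lam ≠ 1) (c : V ⊗[K] V →ₗ[K] V ⊗[K] V)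
    (hHecke : IsHecke lam c) (P Q : Submodule K (V ⊗[K] V))
    (h1 : P.map c = Q) (h2 : Q.map c = P) : Q ≤ P := by
  rw [← h1]
  rintro _ ⟨x, hx, rfl⟩
  have hccx : c (c x) ∈ P := by
    rw [← h2, ← h1]
    exact Submodule.mem_map_of_mem (Submodule.mem_map_of_mem hx)
  have hsub : (lam - 1) • c x = c (c x) - lam • x := by
    rw [hecke_pointwise lam c hHecke x]; module
  have hm : (lam - 1) • c x ∈ P := hsub ▸ P.sub_mem hccx (P.smul_mem lam hx)
  have hm' := P.smul_mem (lam - 1)⁻¹ hm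
  rwa [smul_smul, inv_mul_cancel₀ (sub_ne_zero.mpr hlam1), one_smul] at hm'

theorem bracket_eq_zero_or_surjective'
    (lam : K) (hlam0 : lam ≠ 0) (hlam1 : lam ≠ 1)
    (c : V ⊗[K] V →ₗ[K] V ⊗[K] V) (hHecke : IsHecke lam c)
    (b : V ⊗[K] V →ₗ[K] V) (hb : IsBracket c b) :
    b = 0 ∨ Function.Surjective b := by
  by_cases hb0 : b = 0
  · exact Or.inl hb0
  right
  have hcs : Function.Surjective c := hecke_surjective lam hlam0 c hHecke
  have hC1s : Function.Surjective (opC1 c) := by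
    simp only [opC1, LinearMap.coe_comp, LinearEquiv.coe_coe]
    exact (TensorProduct.assoc K V V V).surjective.comp
      ((LinearMap.rTensor_surjective V hcs).comp
        (TensorProduct.assoc K V V V).symm.surjective)
  have hC2s : Function.Surjective (opC2 c) := LinearMap.lTensor_surjective V hcs
  set P := LinearMap.range (opB1 b) with hPdef
  set Q := LinearMap.range (opB2 b) with hQdef
  have h1 : P.map c = Q := by
    rw [hPdef, ← LinearMap.range_comp, hb.1, LinearMap.range_comp,
      LinearMap.range_eq_top.mpr, Submodule.map_top]
    rw [LinearMap.coe_comp]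
    exact hC1s.comp hC2s
  have h2 : Q.map c = P := by
    rw [hQdef, ← LinearMap.range_comp, hb.2, LinearMap.range_comp,
      LinearMap.range_eq_top.mpr, Submodule.map_top]
    rw [LinearMap.coe_comp]
    exact hC2s.comp hC1s
  have hPQ : P = Q :=
    le_antisymm (le_of_maps lam hlam1 c hHecke Q P h2 h1)
      (le_of_maps lam hlam1 c hHecke P Q h1 h2)
  -- now show surjectivity
  rw [← LinearMap.range_eq_top]
  by_contra hW
  obtain ⟨v, hv⟩ : ∃ v, v ∉ LinearMap.range b := by
    by_contra h; push_neg at h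
    exact hW (Submodule.eq_top_iff'.mpr h)
  obtain ⟨z, hz⟩ : ∃ z, b z ≠ 0 := by
    by_contra h; push_neg at h
    exact hb0 (LinearMap.ext fun x => h x)
  set W := LinearMap.range b with hWdef
  have hv' : (Submodule.Quotient.mk v : V ⧸ W) ≠ 0 := by
    simpa [Submodule.Quotient.mk_eq_zero] using hv
  obtain ⟨f, hf⟩ : ∃ f : Module.Dual K (V ⧸ W), f (Submodule.Quotient.mk v) ≠ 0 := by
    by_contra h; push_neg at h
    exact hv' ((Module.forall_dual_apply_eq_zero_iff K _).mp h)
  set φ : V →ₗ[K] K := f ∘ₗ W.mkQ with hφdef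
  have hφb : φ ∘ₗ b = 0 := by
    apply LinearMap.ext; intro x
    simp only [hφdef, LinearMap.comp_apply, Submodule.mkQ_apply, LinearMap.zero_apply]
    rw [(Submodule.Quotient.mk_eq_zero W).mpr (LinearMap.mem_range_self b x), map_zero]
  set L : V ⊗[K] V →ₗ[K] V :=
    (TensorProduct.rid K V).toLinearMap ∘ₗ LinearMap.lTensor V φ with hLdef
  have hL0 : L ∘ₗ opB2 b = 0 := by
    rw [hLdef, opB2, LinearMap.comp_assoc, ← LinearMap.lTensor_comp, hφb,
      LinearMap.lTensor_zero, LinearMap.comp_zero]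
  have hmemP : (b z) ⊗ₜ[K] v ∈ P := by
    refine ⟨(TensorProduct.assoc K V V V) (z ⊗ₜ v), ?_⟩
    simp [opB1]
  obtain ⟨y, hy⟩ : ∃ y, opB2 b y = (b z) ⊗ₜ[K] v := by
    have : (b z) ⊗ₜ[K] v ∈ Q := hPQ ▸ hmemP
    exact this
  have hzero : L ((b z) ⊗ₜ[K] v) = 0 := by
    rw [← hy, ← LinearMap.comp_apply, hL0, LinearMap.zero_apply]
  have hne : L ((b z) ⊗ₜ[K] v) ≠ 0 := by
    simp only [hLdef, LinearMap.comp_apply, LinearMap.lTensor_tmul,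
      LinearEquiv.coe_coe, TensorProduct.rid_tmul]
    exact smul_ne_zero (by simpa [hφdef] using hf) hz
  exact hne hzero

/-- **Proposition.**  If `(V,c)` is a braided vector space of Hecke type of mark
`lam ≠ 0, 1` and `b` is a `c`-bracket on `(V,c)`, then `b` is zero or surjective. -/
theorem bracket_eq_zero_or_surjective
    (lam : K) (hlam0 : lam ≠ 0) (hlam1 : lam ≠ 1)
    (c : V ⊗[K] V →ₗ[K] V ⊗[K] V) (hbraid : BraidEq c) (hHecke : IsHecke lam c)
    (b : V ⊗[K] V →ₗ[K] V) (hb : IsBracket c b) :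
    b = 0 ∨ Function.Surjective b :=
  bracket_eq_zero_or_surjective' lam hlam0 hlam1 c hHecke b hb

end
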